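/- Suppose g : (0,∞) → ℝ is nonnegative measurable with ∫_0^∞ e^{-px} g(x) dx = exp(-p^α) for all p > 0, 0 < α < 1, and f : (0,∞) → ℝ is nonnegative measurable with Laplace transform F(p) finite for all p > 0. Define f̄(x) = (x/α) ∫_0^∞ t^{-1-1/α} g(x / t^{1/α}) f(t) dt. Then for all p > 0, ∫_0^∞ e^{-px} f̄(x) dx = p^{α-1} F(p^α). -/

import Mathlib

open MeasureTheory Real Set

/-- The Laplace transform of `g` is integrable (else its integral would be `0 ≠ exp`),
and the first-moment Laplace transform of `g` is `α q^(α-1) exp(-q^α)`,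
obtained by differentiating under the integral sign. -/
private lemma laplace_moment_aux (α : ℝ) (hα0 : 0 < α)
    (g : ℝ → ℝ) (hg : Measurable g) (hgpos : ∀ x ∈ Ioi (0 : ℝ), 0 ≤ g x)
    (hgL : ∀ p : ℝ, 0 < p →
      (∫ x in Ioi (0 : ℝ), Real.exp (-p * x) * g x) = Real.exp (-(p ^ α))) :
    ∀ q : ℝ, 0 < q → IntegrableOn (fun x => x * Real.exp (-q * x) * g x) (Ioi 0) ∧
      (∫ x in Ioi (0 : ℝ), x * Real.exp (-q * x) * g x)
        = α * q ^ (α - 1) * Real.exp (-(q ^ α)) := by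
  have hIg : ∀ q : ℝ, 0 < q → IntegrableOn (fun x => Real.exp (-q * x) * g x) (Ioi 0) := by
    intro q hq
    by_contra h
    have h2 := hgL q hq
    rw [integral_undef h] at h2
    exact (Real.exp_pos _).ne' h2.symm
  intro q hq
  have hmeas : ∀ r : ℝ, AEStronglyMeasurable (fun x => Real.exp (-r * x) * g x)
      (volume.restrict (Ioi 0)) := fun r =>
    (((measurable_id.const_mul (-r)).exp).mul hg).aestronglyMeasurable
  have hmeas' : AEStronglyMeasurable (fun x => -(x * Real.exp (-q * x) * g x))
      (volume.restrict (Ioi 0)) :=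
    (((measurable_id.mul ((measurable_id.const_mul (-q)).exp)).mul hg).neg).aestronglyMeasurable
  set bound : ℝ → ℝ := fun x => (4 / q) * (Real.exp (-(q/4) * x) * g x) with hbdef
  have hboundInt : Integrable bound (volume.restrict (Ioi 0)) :=
    ((hIg (q/4) (by positivity)).const_mul _)
  have key := hasDerivAt_integral_of_dominated_loc_of_deriv_le (μ := volume.restrict (Ioi 0))
    (F := fun r x => Real.exp (-r * x) * g x)
    (F' := fun r x => -(x * Real.exp (-r * x) * g x))
    (x₀ := q) (bound := bound) (s := Metric.ball q (q/2)) (Metric.ball_mem_nhds q (by positivity))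
    (Filter.Eventually.of_forall fun r => hmeas r)
    (hIg q hq)
    hmeas'
    ?_ hboundInt ?_
  · obtain ⟨hInt, hDeriv⟩ := key
    constructor
    · exact (hInt.neg).congr (Filter.Eventually.of_forall fun x => by simp)
    · have heqF : (fun r => ∫ x in Ioi (0:ℝ), Real.exp (-r * x) * g x)
          =ᶠ[nhds q] (fun r => Real.exp (-(r ^ α))) :=
        Filter.eventually_of_mem (Ioi_mem_nhds hq) (fun r hr => hgL r hr)
      have hD2 : HasDerivAt (fun r : ℝ => Real.exp (-(r ^ α)))
          (∫ x in Ioi (0:ℝ), -(x * Real.exp (-q * x) * g x)) q :=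
        hDeriv.congr_of_eventuallyEq heqF.symm
      have hrpow : HasDerivAt (fun r : ℝ => r ^ α) (α * q ^ (α - 1)) q := by
        simpa using Real.hasDerivAt_rpow_const (x := q) (p := α) (Or.inl hq.ne')
      have hD3 : HasDerivAt (fun r : ℝ => Real.exp (-(r ^ α)))
          (Real.exp (-(q ^ α)) * (-(α * q ^ (α - 1)))) q := (hrpow.neg).exp
      have h6 := hD2.unique hD3
      rw [integral_neg] at h6
      have h7 : (∫ x in Ioi (0:ℝ), x * Real.exp (-q * x) * g x)
          = Real.exp (-(q ^ α)) * (α * q ^ (α - 1)) := by linarith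
      rw [h7]; ring
  · filter_upwards [ae_restrict_mem measurableSet_Ioi] with x hx r hr
    have hx0 : 0 < x := hx
    have hg0 : 0 ≤ g x := hgpos x hx
    rw [Metric.mem_ball, Real.dist_eq, abs_lt] at hr
    have hrq : q/2 < r := by linarith [hr.1]
    have h1 : ‖-(x * Real.exp (-r * x) * g x)‖ = x * Real.exp (-r * x) * g x := by
      rw [norm_neg, Real.norm_eq_abs, abs_of_nonneg]
      positivity
    rw [h1, hbdef]
    have h2 : Real.exp (-r * x) ≤ Real.exp (-(q/2) * x) := by
      apply Real.exp_le_exp.mpr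
      nlinarith
    have h3 : x * Real.exp (-(q/4) * x) ≤ 4 / q := by
      have h := Real.add_one_le_exp ((q/4)*x)
      have hprod : Real.exp (-(q/4) * x) * Real.exp ((q/4) * x) = 1 := by
        rw [← Real.exp_add]; norm_num
      have h5 := mul_le_mul_of_nonneg_left h (Real.exp_pos (-(q/4)*x)).le
      rw [le_div_iff₀ hq]
      nlinarith [Real.exp_pos (-(q/4)*x)]
    calc x * Real.exp (-r * x) * g x ≤ x * Real.exp (-(q/2) * x) * g x := by
          apply mul_le_mul_of_nonneg_right _ hg0
          exact mul_le_mul_of_nonneg_left h2 hx0.le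
      _ = (x * Real.exp (-(q/4) * x)) * (Real.exp (-(q/4) * x) * g x) := by
          have hsplit : Real.exp (-(q/2) * x)
              = Real.exp (-(q/4) * x) * Real.exp (-(q/4) * x) := by
            rw [← Real.exp_add]; congr 1; ring
          rw [hsplit]; ring
      _ ≤ (4 / q) * (Real.exp (-(q/4) * x) * g x) := by
          apply mul_le_mul_of_nonneg_right h3
          positivity
  · filter_upwards with x r hr
    have hd : HasDerivAt (fun r : ℝ => -r * x) (-x) r := by
      simpa using ((hasDerivAt_id r).neg.mul_const x)
    have := (hd.exp).mul_const (g x)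
    exact this.congr_deriv (by ring)

/-- Change of variables: the inner `x`-integral of the subordination kernel. -/
private lemma laplace_inner_aux (α : ℝ) (hα0 : 0 < α)
    (g : ℝ → ℝ)
    (hIMom : ∀ q : ℝ, 0 < q → IntegrableOn (fun x => x * Real.exp (-q * x) * g x) (Ioi 0))
    (hMom : ∀ q : ℝ, 0 < q → (∫ x in Ioi (0 : ℝ), x * Real.exp (-q * x) * g x)
        = α * q ^ (α - 1) * Real.exp (-(q ^ α)))
    (p : ℝ) (hp : 0 < p) (t : ℝ) (ht : 0 < t) :
    IntegrableOn (fun x => Real.exp (-p * x) * (x / α) *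
        (t ^ (-1 - 1/α) * g (x / t ^ (1/α)))) (Ioi 0) ∧
    (∫ x in Ioi (0 : ℝ), Real.exp (-p * x) * (x / α) * (t ^ (-1 - 1/α) * g (x / t ^ (1/α))))
      = p ^ (α - 1) * Real.exp (-(p ^ α) * t) := by
  set c : ℝ := t ^ (1/α) with hcdef
  have hc : 0 < c := Real.rpow_pos_of_pos ht _
  have hcα : c ^ α = t := by
    rw [hcdef, ← Real.rpow_mul ht.le, one_div, inv_mul_cancel₀ hα0.ne', Real.rpow_one]
  have hq : 0 < p * c := by positivity
  set φ : ℝ → ℝ := fun y => (c / α * t ^ (-1 - 1/α)) * (y * Real.exp (-(p*c) * y) * g y)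
    with hφdef
  have hφint : IntegrableOn φ (Ioi 0) := (hIMom (p*c) hq).const_mul _
  have hpoint : ∀ x : ℝ, Real.exp (-p * x) * (x / α) * (t ^ (-1 - 1/α) * g (x / c))
      = φ (c⁻¹ * x) := by
    intro x
    rw [hφdef]
    simp only []
    rw [show -(p*c) * (c⁻¹ * x) = -p * x from by field_simp,
      show c⁻¹ * x = x / c from inv_mul_eq_div c x]
    field_simp
  constructor
  · have heq : (fun x => Real.exp (-p * x) * (x / α) * (t ^ (-1 - 1/α) * g (x / c)))
        = fun x => φ (c⁻¹ * x) := funext hpoint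
    rw [heq]
    have := (integrableOn_Ioi_comp_mul_left_iff φ 0 (inv_pos.mpr hc)).mpr (by rwa [mul_zero])
    exact this
  · calc (∫ x in Ioi (0 : ℝ), Real.exp (-p * x) * (x / α) * (t ^ (-1 - 1/α) * g (x / c)))
        = ∫ x in Ioi (0:ℝ), φ (c⁻¹ * x) :=
          setIntegral_congr_fun measurableSet_Ioi (fun x _ => hpoint x)
      _ = c * ∫ y in Ioi (0:ℝ), φ y := by
          rw [integral_comp_mul_left_Ioi φ 0 (inv_pos.mpr hc), mul_zero, inv_inv, smul_eq_mul]
      _ = c * ((c / α * t ^ (-1 - 1/α)) * (α * (p*c) ^ (α - 1) * Real.exp (-((p*c) ^ α)))) := by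
          rw [hφdef, MeasureTheory.integral_const_mul, hMom (p*c) hq]
      _ = p ^ (α - 1) * Real.exp (-(p ^ α) * t) := by
          have e1 : (p*c) ^ α = p ^ α * t := by rw [Real.mul_rpow hp.le hc.le, hcα]
          have e2 : (p*c) ^ (α-1) = p ^ (α-1) * t ^ ((1/α)*(α-1)) := by
            rw [Real.mul_rpow hp.le hc.le, hcdef, ← Real.rpow_mul ht.le]
          have e3 : t^(1/α) * t^(1/α) * t^(-1-1/α) * t^((1/α)*(α-1)) = 1 := by
            rw [← Real.rpow_add ht, ← Real.rpow_add ht, ← Real.rpow_add ht,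
              show 1/α + 1/α + (-1-1/α) + 1/α*(α-1) = 0 from by field_simp; ring,
              Real.rpow_zero]
          rw [e1, e2, hcdef, show -(p^α) * t = -(p^α * t) from by ring]
          have hαne : α ≠ 0 := hα0.ne'
          set T1 := t ^ (1/α) with hT1
          set T := t ^ (-1-1/α) with hT
          set T2 := t ^ (1/α*(α-1)) with hT2
          field_simp
          linear_combination e3

theorem laplace_levy_subordination_bar (α : ℝ) (hα0 : 0 < α) (hα1 : α < 1)
    (g : ℝ → ℝ) (hg : Measurable g) (hgpos : ∀ x ∈ Ioi (0 : ℝ), 0 ≤ g x)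
    (hgL : ∀ p : ℝ, 0 < p →
      (∫ x in Ioi (0 : ℝ), Real.exp (-p * x) * g x) = Real.exp (-(p ^ α)))
    (f : ℝ → ℝ) (hf : Measurable f) (hfpos : ∀ t ∈ Ioi (0 : ℝ), 0 ≤ f t)
    (hint : ∀ p : ℝ, 0 < p →
      IntegrableOn (fun t => Real.exp (-p * t) * f t) (Ioi 0))
    (F : ℝ → ℝ) (hF : ∀ p : ℝ, F p = ∫ t in Ioi (0 : ℝ), Real.exp (-p * t) * f t) :
    ∀ p : ℝ, 0 < p →
      (∫ x in Ioi (0 : ℝ), Real.exp (-p * x) *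
        (x / α * ∫ t in Ioi (0 : ℝ), t ^ (-1 - 1 / α) * g (x / t ^ (1 / α)) * f t))
        = p ^ (α - 1) * F (p ^ α) := by
  intro p hp
  have hMomFull := laplace_moment_aux α hα0 g hg hgpos hgL
  have hInner := laplace_inner_aux α hα0 g (fun q hq => (hMomFull q hq).1)
    (fun q hq => (hMomFull q hq).2) p hp
  set μ := volume.restrict (Ioi (0:ℝ)) with hμ
  set K : ℝ → ℝ → ℝ := fun x t => t ^ (-1 - 1/α) * g (x / t ^ (1/α)) * f t with hK
  set H : ℝ → ℝ → ℝ := fun x t => Real.exp (-p*x) * (x/α) * K x t with hH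
  have hKm : Measurable (fun z : ℝ × ℝ => K z.1 z.2) := by
    rw [hK]; fun_prop
  have hHm : Measurable (fun z : ℝ × ℝ => H z.1 z.2) := by
    rw [hH]; fun_prop
  have hpα : 0 < p ^ α := Real.rpow_pos_of_pos hp α
  -- step 1 : inner x-lintegral for fixed t
  have h1 : ∀ t ∈ Ioi (0:ℝ), (∫⁻ x in Ioi (0:ℝ), ENNReal.ofReal (H x t))
      = ENNReal.ofReal (p ^ (α-1) * Real.exp (-(p^α) * t) * f t) := by
    intro t ht
    have hint2 : IntegrableOn
        (fun x => (Real.exp (-p*x) * (x/α) * (t ^ (-1-1/α) * g (x / t ^ (1/α)))) * f t)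
        (Ioi 0) := (hInner t ht).1.mul_const _
    have hfun : ∀ x : ℝ, H x t
        = (Real.exp (-p*x) * (x/α) * (t ^ (-1-1/α) * g (x / t ^ (1/α)))) * f t := by
      intro x; rw [hH, hK]; ring
    have hnn : 0 ≤ᵐ[μ]
        fun x => (Real.exp (-p*x) * (x/α) * (t ^ (-1-1/α) * g (x / t ^ (1/α)))) * f t := by
      filter_upwards [ae_restrict_mem measurableSet_Ioi] with x hx
      have hx0 : (0:ℝ) < x := hx
      have harg : x / t ^ (1/α) ∈ Ioi (0:ℝ) := by
        have : (0:ℝ) < t ^ (1/α) := Real.rpow_pos_of_pos ht _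
        exact div_pos hx0 this
      have := hgpos _ harg
      have := hfpos t ht
      have ht' : (0:ℝ) ≤ t ^ (-1-1/α) := (Real.rpow_pos_of_pos ht _).le
      positivity
    calc (∫⁻ x in Ioi (0:ℝ), ENNReal.ofReal (H x t))
        = ∫⁻ x in Ioi (0:ℝ), ENNReal.ofReal
            ((Real.exp (-p*x) * (x/α) * (t ^ (-1-1/α) * g (x / t ^ (1/α)))) * f t) := by
          apply lintegral_congr (fun x => by rw [hfun x])
      _ = ENNReal.ofReal (∫ x in Ioi (0:ℝ),
            (Real.exp (-p*x) * (x/α) * (t ^ (-1-1/α) * g (x / t ^ (1/α)))) * f t) :=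
          (ofReal_integral_eq_lintegral_ofReal hint2 hnn).symm
      _ = ENNReal.ofReal (p ^ (α-1) * Real.exp (-(p^α) * t) * f t) := by
          rw [MeasureTheory.integral_mul_const, (hInner t ht).2]
  -- step 2 : t-lintegral of the result
  have h2 : (∫⁻ t in Ioi (0:ℝ), ENNReal.ofReal (p ^ (α-1) * Real.exp (-(p^α) * t) * f t))
      = ENNReal.ofReal (p ^ (α-1) * F (p^α)) := by
    have hintt : IntegrableOn (fun t => p ^ (α-1) * (Real.exp (-(p^α) * t) * f t)) (Ioi 0) :=
      (hint (p^α) hpα).const_mul _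
    have hnn : 0 ≤ᵐ[μ] fun t => p ^ (α-1) * (Real.exp (-(p^α) * t) * f t) := by
      filter_upwards [ae_restrict_mem measurableSet_Ioi] with t ht
      have := hfpos t ht
      positivity
    calc (∫⁻ t in Ioi (0:ℝ), ENNReal.ofReal (p ^ (α-1) * Real.exp (-(p^α) * t) * f t))
        = ∫⁻ t in Ioi (0:ℝ), ENNReal.ofReal (p ^ (α-1) * (Real.exp (-(p^α) * t) * f t)) := by
          apply lintegral_congr (fun t => by rw [mul_assoc])
      _ = ENNReal.ofReal (∫ t in Ioi (0:ℝ), p ^ (α-1) * (Real.exp (-(p^α) * t) * f t)) :=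
          (ofReal_integral_eq_lintegral_ofReal hintt hnn).symm
      _ = ENNReal.ofReal (p ^ (α-1) * F (p^α)) := by
          rw [MeasureTheory.integral_const_mul, hF (p^α)]
  -- step 3 : Tonelli
  have h3 : (∫⁻ x in Ioi (0:ℝ), ∫⁻ t in Ioi (0:ℝ), ENNReal.ofReal (H x t))
      = ENNReal.ofReal (p ^ (α-1) * F (p^α)) := by
    rw [lintegral_lintegral_swap (hHm.ennreal_ofReal.aemeasurable)]
    rw [setLIntegral_congr_fun_ae measurableSet_Ioi
      (Filter.Eventually.of_forall fun t ht => h1 t ht)]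
    exact h2
  -- step 4 : finiteness a.e.
  have hJm : Measurable (fun x => ∫⁻ t in Ioi (0:ℝ), ENNReal.ofReal (H x t)) :=
    Measurable.lintegral_prod_right' (f := fun z : ℝ × ℝ => ENNReal.ofReal (H z.1 z.2))
      hHm.ennreal_ofReal
  have hfin : ∀ᵐ x ∂μ, (∫⁻ t in Ioi (0:ℝ), ENNReal.ofReal (H x t)) < ⊤ := by
    apply ae_lt_top hJm
    rw [h3]
    exact ENNReal.ofReal_ne_top
  -- step 5 : a.e. identification of the goal integrand
  have hae : ∀ᵐ x ∂μ, ENNReal.ofReal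
      (Real.exp (-p*x) * (x/α * ∫ t in Ioi (0:ℝ), K x t))
      = ∫⁻ t in Ioi (0:ℝ), ENNReal.ofReal (H x t) := by
    filter_upwards [ae_restrict_mem measurableSet_Ioi, hfin] with x hx hxfin
    have hx0 : (0:ℝ) < x := hx
    have hc0 : 0 < Real.exp (-p*x) * (x/α) := by positivity
    have hsplit : ∀ t : ℝ, ENNReal.ofReal (H x t)
        = ENNReal.ofReal (Real.exp (-p*x) * (x/α)) * ENNReal.ofReal (K x t) := by
      intro t
      rw [hH]
      simp only []
      rw [ENNReal.ofReal_mul hc0.le]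
    have hKxm : Measurable (fun t => K x t) := by rw [hK]; fun_prop
    have hlsplit : (∫⁻ t in Ioi (0:ℝ), ENNReal.ofReal (H x t))
        = ENNReal.ofReal (Real.exp (-p*x) * (x/α))
          * ∫⁻ t in Ioi (0:ℝ), ENNReal.ofReal (K x t) := by
      rw [lintegral_congr (fun t => hsplit t), lintegral_const_mul _ hKxm.ennreal_ofReal]
    have hKfin : (∫⁻ t in Ioi (0:ℝ), ENNReal.ofReal (K x t)) ≠ ⊤ := by
      intro htop
      rw [hlsplit, htop, ENNReal.mul_top ((ENNReal.ofReal_pos.mpr hc0).ne')] at hxfin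
      exact (lt_irrefl _ hxfin)
    have hKnn : 0 ≤ᵐ[μ] fun t => K x t := by
      filter_upwards [ae_restrict_mem measurableSet_Ioi] with t ht
      have ht0 : (0:ℝ) < t := ht
      have harg : x / t ^ (1/α) ∈ Ioi (0:ℝ) :=
        div_pos hx0 (Real.rpow_pos_of_pos ht0 _)
      have h1 := hgpos _ harg
      have h2 := hfpos t ht
      have h3 : (0:ℝ) ≤ t ^ (-1-1/α) := (Real.rpow_pos_of_pos ht0 _).le
      rw [hK]
      simp only []
      positivity
    have hKval : (∫ t in Ioi (0:ℝ), K x t)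
        = (∫⁻ t in Ioi (0:ℝ), ENNReal.ofReal (K x t)).toReal :=
      integral_eq_lintegral_of_nonneg_ae hKnn hKxm.aestronglyMeasurable
    have hKint_nn : 0 ≤ ∫ t in Ioi (0:ℝ), K x t := by
      rw [hKval]; exact ENNReal.toReal_nonneg
    rw [hlsplit, show Real.exp (-p*x) * (x/α * ∫ t in Ioi (0:ℝ), K x t)
        = (Real.exp (-p*x) * (x/α)) * ∫ t in Ioi (0:ℝ), K x t from by ring,
      ENNReal.ofReal_mul hc0.le, hKval, ENNReal.ofReal_toReal hKfin]
  -- step 6 : conclusion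
  have hGnn : 0 ≤ᵐ[μ] fun x => Real.exp (-p*x) * (x/α * ∫ t in Ioi (0:ℝ), K x t) := by
    filter_upwards [ae_restrict_mem measurableSet_Ioi] with x hx
    have hx0 : (0:ℝ) < x := hx
    have hKint_nn : 0 ≤ ∫ t in Ioi (0:ℝ), K x t := by
      apply setIntegral_nonneg measurableSet_Ioi
      intro t ht
      have ht0 : (0:ℝ) < t := ht
      have harg : x / t ^ (1/α) ∈ Ioi (0:ℝ) :=
        div_pos hx0 (Real.rpow_pos_of_pos ht0 _)
      have h1 := hgpos _ harg
      have h2 := hfpos t ht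
      have h3 : (0:ℝ) ≤ t ^ (-1-1/α) := (Real.rpow_pos_of_pos ht0 _).le
      rw [hK]
      simp only []
      positivity
    positivity
  have hGm : AEStronglyMeasurable
      (fun x => Real.exp (-p*x) * (x/α * ∫ t in Ioi (0:ℝ), K x t)) μ := by
    have hI : Measurable fun x => ∫ t in Ioi (0:ℝ), K x t :=
      (StronglyMeasurable.integral_prod_right'
        (ν := μ) (f := fun z : ℝ × ℝ => K z.1 z.2) hKm.stronglyMeasurable).measurable
    exact (((measurable_id.const_mul (-p)).exp).mul
      ((measurable_id.div_const α).mul hI)).aestronglyMeasurable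
  have hval_nn : 0 ≤ p ^ (α-1) * F (p^α) := by
    have hFnn : 0 ≤ F (p^α) := by
      rw [hF (p^α)]
      apply setIntegral_nonneg measurableSet_Ioi
      intro t ht
      have := hfpos t ht
      positivity
    positivity
  calc (∫ x in Ioi (0 : ℝ), Real.exp (-p * x) *
        (x / α * ∫ t in Ioi (0 : ℝ), t ^ (-1 - 1 / α) * g (x / t ^ (1 / α)) * f t))
      = (∫⁻ x in Ioi (0:ℝ), ENNReal.ofReal
          (Real.exp (-p*x) * (x/α * ∫ t in Ioi (0:ℝ), K x t))).toReal :=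
        integral_eq_lintegral_of_nonneg_ae hGnn hGm
    _ = (∫⁻ x in Ioi (0:ℝ), ∫⁻ t in Ioi (0:ℝ), ENNReal.ofReal (H x t)).toReal := by
        rw [lintegral_congr_ae hae]
    _ = p ^ (α-1) * F (p^α) := by
        rw [h3, ENNReal.toReal_ofReal hval_nn]
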